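/- The solutions in even integers 4 ≤ q₀ < q₁ < q₂ and even p ≥ 4 with q₀ ∣ p, q₁ ∣ p, and q₂ ∣ p to the equation 1/q₀ + 1/q₁ + 1/q₂ + 1/p = 1/2 (as rationals) are exactly (q₀,q₁,q₂,p) ∈ {(4,6,14,84), (4,6,16,48), (4,6,18,36), (4,6,24,24), (4,8,10,40), (4,8,12,24), (4,8,16,16)}. -/
import Mathlib
set_option maxHeartbeats 1000000

theorem stmt_9 (q₀ q₁ q₂ p : ℕ) (hq₀ : 4 ≤ q₀) (h₀₁ : q₀ < q₁) (h₁₂ : q₁ < q₂)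
    (he₀ : Even q₀) (he₁ : Even q₁) (he₂ : Even q₂) (hp : 4 ≤ p) (hpe : Even p)
    (hd₀ : q₀ ∣ p) (hd₁ : q₁ ∣ p) (hd₂ : q₂ ∣ p) :
    (1 : ℚ) / (q₀ : ℚ) + 1 / (q₁ : ℚ) + 1 / (q₂ : ℚ) + 1 / (p : ℚ) = 1 / 2 ↔
      (q₀ = 4 ∧ q₁ = 6 ∧ q₂ = 14 ∧ p = 84) ∨
      (q₀ = 4 ∧ q₁ = 6 ∧ q₂ = 16 ∧ p = 48) ∨
      (q₀ = 4 ∧ q₁ = 6 ∧ q₂ = 18 ∧ p = 36) ∨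
      (q₀ = 4 ∧ q₁ = 6 ∧ q₂ = 24 ∧ p = 24) ∨
      (q₀ = 4 ∧ q₁ = 8 ∧ q₂ = 10 ∧ p = 40) ∨
      (q₀ = 4 ∧ q₁ = 8 ∧ q₂ = 12 ∧ p = 24) ∨
      (q₀ = 4 ∧ q₁ = 8 ∧ q₂ = 16 ∧ p = 16) := by
  constructor
  · intro h
    obtain ⟨a, ha⟩ := he₀
    obtain ⟨b, hb⟩ := he₁
    obtain ⟨c, hc⟩ := he₂
    obtain ⟨d, hd⟩ := hpe
    have hq₂p : q₂ ≤ p := Nat.le_of_dvd (by omega) hd₂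
    have h0 : (0:ℚ) < q₀ := by exact_mod_cast (by omega : 0 < q₀)
    have h1 : (0:ℚ) < q₁ := by exact_mod_cast (by omega : 0 < q₁)
    have h2 : (0:ℚ) < q₂ := by exact_mod_cast (by omega : 0 < q₂)
    have h3 : (0:ℚ) < p := by exact_mod_cast (by omega : 0 < p)
    have key : 2*(q₁*q₂*p + q₀*q₂*p + q₀*q₁*p + q₀*q₁*q₂) = q₀*q₁*q₂*p := by
      have h' : (2:ℚ)*(q₁*q₂*p + q₀*q₂*p + q₀*q₁*p + q₀*q₁*q₂) = q₀*q₁*q₂*p := by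
        field_simp at h
        linarith
      exact_mod_cast h'
    have i01 : (1:ℚ)/q₁ < 1/q₀ := by
      apply one_div_lt_one_div_of_lt h0
      exact_mod_cast h₀₁
    have i12 : (1:ℚ)/q₂ < 1/q₁ := by
      apply one_div_lt_one_div_of_lt h1
      exact_mod_cast h₁₂
    have i2p : (1:ℚ)/p ≤ 1/q₂ := by
      apply one_div_le_one_div_of_le h2
      exact_mod_cast hq₂p
    have i0 : (1:ℚ)/q₀ ≤ 1/4 := by
      apply one_div_le_one_div_of_le (by norm_num)
      exact_mod_cast hq₀
    have i1 : (1:ℚ)/q₁ ≤ 1/6 := by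
      apply one_div_le_one_div_of_le (by norm_num)
      exact_mod_cast (by omega : 6 ≤ q₁)
    have hcan0 : (1/(q₀:ℚ))*q₀ = 1 := one_div_mul_cancel (ne_of_gt h0)
    have hcan1 : (1/(q₁:ℚ))*q₁ = 1 := one_div_mul_cancel (ne_of_gt h1)
    have hcan2 : (1/(q₂:ℚ))*q₂ = 1 := one_div_mul_cancel (ne_of_gt h2)
    have hb₀ : q₀ < 8 := by
      have hq : (1:ℚ)/2 < 4*(1/q₀) := by linarith
      have : (q₀:ℚ) < 8 := by nlinarith
      exact_mod_cast this
    have hb₁ : q₁ < 12 := by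
      have hq : (1:ℚ)/4 < 3*(1/q₁) := by linarith
      have : (q₁:ℚ) < 12 := by nlinarith
      exact_mod_cast this
    have hb₂ : q₂ ≤ 24 := by
      have hq : (1:ℚ)/12 ≤ 2*(1/q₂) := by linarith
      have : (q₂:ℚ) ≤ 24 := by nlinarith
      exact_mod_cast this
    clear h i01 i12 i2p i0 i1 hcan0 hcan1 hcan2 h0 h1 h2 h3
    subst ha hb hc hd
    have hA : 2 ≤ a ∧ a ≤ 3 := by omega
    have hB : 3 ≤ b ∧ b ≤ 5 := by omega
    have hC : 4 ≤ c ∧ c ≤ 12 := by omega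
    obtain ⟨hA1, hA2⟩ := hA
    obtain ⟨hB1, hB2⟩ := hB
    obtain ⟨hC1, hC2⟩ := hC
    have hcb : b < c := by omega
    have hba : a < b := by omega
    clear hq₀ h₀₁ h₁₂ hp hd₀ hd₁ hq₂p hb₀ hb₁ hb₂
    interval_cases a <;> interval_cases b <;> interval_cases c <;> omega
  · rintro (⟨rfl,rfl,rfl,rfl⟩|⟨rfl,rfl,rfl,rfl⟩|⟨rfl,rfl,rfl,rfl⟩|⟨rfl,rfl,rfl,rfl⟩|⟨rfl,rfl,rfl,rfl⟩|⟨rfl,rfl,rfl,rfl⟩|⟨rfl,rfl,rfl,rfl⟩) <;> norm_num
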